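/- Let s : (0, R) → ℝ be a nonnegative differentiable function, let k ≥ 0 be an integer, λ ≥ 1, C₀ ≥ 0, and A ≥ 0 constants, and suppose that for all r ∈ (0, R): (k+1)(1/r − A)·s(r) ≤ s'(r) + C₀ r^{k+1} λ^{k/2+1}. Suppose moreover λ^{-1/2} < R and s(λ^{-1/2}) ≤ C₁ λ^{-k/2}. Then there is a constant C (depending only on C₀, C₁, A, k, R) such that s(r) ≤ C r^{k+1} λ^{(k+1)/2} for all r ∈ (0, λ^{-1/2}]. -/

import Mathlib

open Set

/-- Integrating-factor step: if `s ≥ 0` on `(0,R)` satisfies the differential inequality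
`(k+1)(1/r − A) s(r) ≤ s'(r) + C₀ r^{k+1} λ^{k/2+1}` on `(0,R)`, `λ ≥ 1`,
`λ^{-1/2} < R`, and `s(λ^{-1/2}) ≤ C₁ λ^{-k/2}`, then there is a constant `C`
(depending only on `C₀, C₁, A, k, R`) with `s(r) ≤ C r^{k+1} λ^{(k+1)/2}` for all
`r ∈ (0, λ^{-1/2}]`. -/
theorem stmt3 (k : ℕ) (C₀ C₁ A R : ℝ)
    (hC₀ : 0 ≤ C₀) (hC₁ : 0 ≤ C₁) (hA : 0 ≤ A) (hR : 0 < R) :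
    ∃ C : ℝ, ∀ (s s' : ℝ → ℝ) (lam : ℝ), 1 ≤ lam →
      (∀ r ∈ Ioo (0 : ℝ) R, 0 ≤ s r) →
      (∀ r ∈ Ioo (0 : ℝ) R, HasDerivAt s (s' r) r) →
      (∀ r ∈ Ioo (0 : ℝ) R,
        ((k : ℝ) + 1) * (1 / r - A) * s r ≤ s' r + C₀ * r ^ (k + 1) * lam ^ ((k : ℝ) / 2 + 1)) →
      lam ^ (-(1 : ℝ) / 2) < R →
      s (lam ^ (-(1 : ℝ) / 2)) ≤ C₁ * lam ^ (-(k : ℝ) / 2) →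
      ∀ r ∈ Ioc (0 : ℝ) (lam ^ (-(1 : ℝ) / 2)),
        s r ≤ C * r ^ (k + 1) * lam ^ (((k : ℝ) + 1) / 2) := by
  set c : ℝ := ((k : ℝ) + 1) * A with hc
  have hc0 : 0 ≤ c := by positivity
  set E : ℝ := Real.exp (c * R) with hEdef
  have hE1 : (1 : ℝ) ≤ E := Real.one_le_exp (by positivity)
  refine ⟨(C₁ + C₀) * E, ?_⟩
  intro s s' lam hlam hs0 hds hineq hρR hsρ r hr
  have hlam0 : (0 : ℝ) < lam := by linarith
  set ρ : ℝ := lam ^ (-(1 : ℝ) / 2) with hρdef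
  have hρpos : 0 < ρ := Real.rpow_pos_of_pos hlam0 _
  set M : ℝ := C₀ * E * lam ^ ((k : ℝ) / 2 + 1) with hM
  have hM0 : 0 ≤ M := by positivity
  set g : ℝ → ℝ := fun x => s x * Real.exp (c * x) / x ^ (k + 1) + M * x with hg
  -- derivative of g and its nonnegativity on Ioo 0 R
  have hder : ∀ x ∈ Ioo (0 : ℝ) R, ∃ d, HasDerivAt g d x ∧ 0 ≤ d := by
    intro x hx
    obtain ⟨hx0, hxR⟩ := hx
    have hxne : x ^ (k + 1) ≠ 0 := pow_ne_zero _ hx0.ne'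
    have he : HasDerivAt (fun y : ℝ => Real.exp (c * y)) (Real.exp (c * x) * c) x := by
      simpa using ((hasDerivAt_id x).const_mul c).exp
    have hu : HasDerivAt (fun y => s y * Real.exp (c * y))
        (s' x * Real.exp (c * x) + s x * (Real.exp (c * x) * c)) x :=
      (hds x ⟨hx0, hxR⟩).mul he
    have hv : HasDerivAt (fun y : ℝ => y ^ (k + 1)) (((k : ℝ) + 1) * x ^ k) x := by
      simpa using hasDerivAt_pow (k + 1) x
    have hq : HasDerivAt (fun y => s y * Real.exp (c * y) / y ^ (k + 1))
        (((s' x * Real.exp (c * x) + s x * (Real.exp (c * x) * c)) * x ^ (k + 1)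
          - s x * Real.exp (c * x) * (((k : ℝ) + 1) * x ^ k)) / (x ^ (k + 1)) ^ 2) x :=
      hu.div hv hxne
    have hgd : HasDerivAt g
        (((s' x * Real.exp (c * x) + s x * (Real.exp (c * x) * c)) * x ^ (k + 1)
          - s x * Real.exp (c * x) * (((k : ℝ) + 1) * x ^ k)) / (x ^ (k + 1)) ^ 2 + M) x := by
      exact (hq.add ((hasDerivAt_id x).const_mul M)).congr_deriv (by ring)
    refine ⟨_, hgd, ?_⟩
    have hEx : Real.exp (c * x) ≤ E := by
      rw [hEdef]
      exact Real.exp_le_exp.2 (by nlinarith)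
    have hEx0 : (0 : ℝ) < Real.exp (c * x) := Real.exp_pos _
    have key := hineq x ⟨hx0, hxR⟩
    have key' : ((k : ℝ) + 1) * s x - c * x * s x
        ≤ s' x * x + C₀ * x ^ (k + 2) * lam ^ ((k : ℝ) / 2 + 1) := by
      have h := mul_le_mul_of_nonneg_right key hx0.le
      calc ((k : ℝ) + 1) * s x - c * x * s x
          = (((k : ℝ) + 1) * (1 / x - A) * s x) * x := by
            rw [hc]; field_simp
        _ ≤ (s' x + C₀ * x ^ (k + 1) * lam ^ ((k : ℝ) / 2 + 1)) * x := h
        _ = s' x * x + C₀ * x ^ (k + 2) * lam ^ ((k : ℝ) / 2 + 1) := by ring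
    have hpow2 : (0 : ℝ) < (x ^ (k + 1)) ^ 2 := by positivity
    have hnum : -(C₀ * lam ^ ((k : ℝ) / 2 + 1) * Real.exp (c * x) * (x ^ (k + 1)) ^ 2)
        ≤ (s' x * Real.exp (c * x) + s x * (Real.exp (c * x) * c)) * x ^ (k + 1)
          - s x * Real.exp (c * x) * (((k : ℝ) + 1) * x ^ k) := by
      have h1 : -(C₀ * x ^ (k + 2) * lam ^ ((k : ℝ) / 2 + 1))
          ≤ s' x * x + c * x * s x - ((k : ℝ) + 1) * s x := by linarith
      have h2 := mul_le_mul_of_nonneg_right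
        (mul_le_mul_of_nonneg_left h1 hEx0.le) (pow_nonneg hx0.le k)
      calc -(C₀ * lam ^ ((k : ℝ) / 2 + 1) * Real.exp (c * x) * (x ^ (k + 1)) ^ 2)
          = Real.exp (c * x) * (-(C₀ * x ^ (k + 2) * lam ^ ((k : ℝ) / 2 + 1))) * x ^ k := by
            ring
        _ ≤ Real.exp (c * x) * (s' x * x + c * x * s x - ((k : ℝ) + 1) * s x) * x ^ k := h2
        _ = (s' x * Real.exp (c * x) + s x * (Real.exp (c * x) * c)) * x ^ (k + 1)
            - s x * Real.exp (c * x) * (((k : ℝ) + 1) * x ^ k) := by ring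
    have hEb : C₀ * lam ^ ((k : ℝ) / 2 + 1) * Real.exp (c * x) * (x ^ (k + 1)) ^ 2
        ≤ C₀ * lam ^ ((k : ℝ) / 2 + 1) * E * (x ^ (k + 1)) ^ 2 := by
      gcongr
    have hdge : -M ≤ ((s' x * Real.exp (c * x) + s x * (Real.exp (c * x) * c)) * x ^ (k + 1)
          - s x * Real.exp (c * x) * (((k : ℝ) + 1) * x ^ k)) / (x ^ (k + 1)) ^ 2 := by
      rw [le_div_iff₀ hpow2]
      calc -M * (x ^ (k + 1)) ^ 2
          = -(C₀ * lam ^ ((k : ℝ) / 2 + 1) * E * (x ^ (k + 1)) ^ 2) := by rw [hM]; ring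
        _ ≤ -(C₀ * lam ^ ((k : ℝ) / 2 + 1) * Real.exp (c * x) * (x ^ (k + 1)) ^ 2) := by
            linarith
        _ ≤ _ := hnum
    linarith
  -- g is monotone on Ioo 0 R
  have hmono : MonotoneOn g (Ioo (0 : ℝ) R) := by
    apply monotoneOn_of_deriv_nonneg (convex_Ioo 0 R)
    · intro x hx
      exact ((hder x hx).choose_spec.1.differentiableAt).continuousAt.continuousWithinAt
    · rw [interior_Ioo]
      intro x hx
      exact ((hder x hx).choose_spec.1.differentiableAt).differentiableWithinAt
    · rw [interior_Ioo]
      intro x hx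
      obtain ⟨d, hd, hd0⟩ := hder x hx
      rw [hd.deriv]; exact hd0
  obtain ⟨hr0, hrρ⟩ := hr
  have hrR : r < R := lt_of_le_of_lt hrρ hρR
  have hrmem : r ∈ Ioo (0 : ℝ) R := ⟨hr0, hrR⟩
  have hρmem : ρ ∈ Ioo (0 : ℝ) R := ⟨hρpos, hρR⟩
  have hgrρ : g r ≤ g ρ := hmono hrmem hρmem hrρ
  have hrpow : (0 : ℝ) < r ^ (k + 1) := by positivity
  have hsr : s r ≤ g r * r ^ (k + 1) := by
    have h1 : s r ≤ s r * Real.exp (c * r) :=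
      le_mul_of_one_le_right (hs0 r hrmem) (Real.one_le_exp (by positivity))
    have h2 : s r * Real.exp (c * r) / r ^ (k + 1) ≤ g r := by
      have hMr : 0 ≤ M * r := mul_nonneg hM0 hr0.le
      simp only [hg]
      linarith
    calc s r = s r / r ^ (k + 1) * r ^ (k + 1) := by field_simp
      _ ≤ s r * Real.exp (c * r) / r ^ (k + 1) * r ^ (k + 1) := by gcongr
      _ ≤ g r * r ^ (k + 1) := by gcongr
  -- bound g ρ
  have hρpow : ρ ^ (k + 1) = lam ^ (-(((k : ℝ) + 1)) / 2) := by
    rw [hρdef, ← Real.rpow_natCast (lam ^ (-(1 : ℝ) / 2)) (k + 1),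
      ← Real.rpow_mul hlam0.le]
    congr 1
    push_cast
    ring
  have hEρ : Real.exp (c * ρ) ≤ E := by
    rw [hEdef]
    exact Real.exp_le_exp.2 (by nlinarith [hρmem.2, hρpos])
  have hρinv : (ρ ^ (k + 1))⁻¹ = lam ^ ((((k : ℝ) + 1)) / 2) := by
    rw [hρpow, ← Real.rpow_neg hlam0.le]
    congr 1
    ring
  have hexp1 : lam ^ (-(k : ℝ) / 2) * lam ^ ((((k : ℝ) + 1)) / 2) = lam ^ ((1 : ℝ) / 2) := by
    rw [← Real.rpow_add hlam0]
    congr 1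
    ring
  have hexp2 : lam ^ ((1 : ℝ) / 2) ≤ lam ^ ((((k : ℝ) + 1)) / 2) := by
    apply Real.rpow_le_rpow_of_exponent_le hlam
    have : (0 : ℝ) ≤ (k : ℝ) := Nat.cast_nonneg k
    linarith
  have hMρ : M * ρ = C₀ * E * lam ^ ((((k : ℝ) + 1)) / 2) := by
    rw [hM, hρdef, mul_assoc, ← Real.rpow_add hlam0]
    congr 2
    ring
  have hgρ : g ρ ≤ (C₁ + C₀) * E * lam ^ (((k : ℝ) + 1) / 2) := by
    have hsρ0 : 0 ≤ s ρ := hs0 ρ hρmem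
    have h1 : s ρ * Real.exp (c * ρ) ≤ C₁ * lam ^ (-(k : ℝ) / 2) * E :=
      mul_le_mul hsρ hEρ (Real.exp_pos _).le (by positivity)
    have h2 : s ρ * Real.exp (c * ρ) / ρ ^ (k + 1)
        ≤ C₁ * lam ^ (-(k : ℝ) / 2) * E * lam ^ ((((k : ℝ) + 1)) / 2) := by
      rw [div_eq_mul_inv, hρinv]
      have : (0 : ℝ) ≤ lam ^ ((((k : ℝ) + 1)) / 2) := (Real.rpow_pos_of_pos hlam0 _).le
      exact mul_le_mul_of_nonneg_right h1 this
    have h3 : C₁ * lam ^ (-(k : ℝ) / 2) * E * lam ^ ((((k : ℝ) + 1)) / 2)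
        = C₁ * E * lam ^ ((1 : ℝ) / 2) := by
      rw [← hexp1]; ring
    have h4 : C₁ * E * lam ^ ((1 : ℝ) / 2) ≤ C₁ * E * lam ^ ((((k : ℝ) + 1)) / 2) := by
      have hCE : (0 : ℝ) ≤ C₁ * E := by positivity
      exact mul_le_mul_of_nonneg_left hexp2 hCE
    simp only [hg]
    rw [hMρ]
    calc s ρ * Real.exp (c * ρ) / ρ ^ (k + 1) + C₀ * E * lam ^ ((((k : ℝ) + 1)) / 2)
        ≤ C₁ * E * lam ^ ((((k : ℝ) + 1)) / 2) + C₀ * E * lam ^ ((((k : ℝ) + 1)) / 2) := by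
          have := h2.trans (h3.le.trans' le_rfl)
          linarith [h2, h3 ▸ h2, h4]
      _ = (C₁ + C₀) * E * lam ^ (((k : ℝ) + 1) / 2) := by ring
  calc s r ≤ g r * r ^ (k + 1) := hsr
    _ ≤ g ρ * r ^ (k + 1) := mul_le_mul_of_nonneg_right hgrρ hrpow.le
    _ ≤ (C₁ + C₀) * E * lam ^ (((k : ℝ) + 1) / 2) * r ^ (k + 1) :=
        mul_le_mul_of_nonneg_right hgρ hrpow.le
    _ = (C₁ + C₀) * E * r ^ (k + 1) * lam ^ (((k : ℝ) + 1) / 2) := by ring
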